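/- Let 1 < p < 2. For every constant C > 0 there exists a measurable function f on [0,1]² such that ‖f(·, t)‖_{X_p} ≤ 1 for almost every t ∈ [0,1], while ∫_0^1 ‖f(t, ·)‖_{X_p} dt > C. (That is, the transposition operator 𝒯 f(s,t) = f(t,s) is NOT bounded from L^∞(X_p) to L^1(X_p) on [0,1]².) -/

import Mathlib

open MeasureTheory
open scoped ENNReal

/-- Lebesgue measure restricted to `[0,1]`. -/
noncomputable def mu01 : Measure ℝ := volume.restrict (Set.Icc 0 1)

/-- The weight `W_p(t) = (log(e/t))^{1-p}` for `t ∈ (0,1]`, `W_p(0)=0`. -/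
noncomputable def Wp (p t : ℝ) : ℝ :=
  if t = 0 then 0 else Real.log (Real.exp 1 / t) ^ (1 - p)

/-- The norm of the Lorentz space `X_p` on `[0,1]`:
`‖f‖_{X_p} = (∫_0^∞ W_p(μ{s ∈ [0,1] : |f s|^p > λ}) dλ)^{1/p}`. -/
noncomputable def XpNorm (p : ℝ) (f : ℝ → ℝ) : ℝ≥0∞ :=
  (∫⁻ lam in Set.Ioi (0 : ℝ),
      ENNReal.ofReal
        (Wp p (volume {s : ℝ | s ∈ Set.Icc (0 : ℝ) 1 ∧ lam < |f s| ^ p}).toReal)) ^ (1 / p)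

/-- Luxemburg norm of the exponential Orlicz space `Exp L^α` on `[0,1]`. -/
noncomputable def expLNorm (α : ℝ) (f : ℝ → ℝ) : ℝ≥0∞ :=
  ⨅ (lam : ℝ) (_ : 0 < lam ∧
      ∫⁻ t, ENNReal.ofReal (Real.exp ((|f t| / lam) ^ α) - 1) ∂mu01 ≤ 1),
    ENNReal.ofReal lam

/-- Weak `ℓ^q` quasinorm of a finite family of reals. -/
noncomputable def weakLq (q : ℝ) {n : ℕ} (a : Fin n → ℝ) : ℝ :=
  ⨆ t : Set.Ioi (0 : ℝ), t.1 * (Nat.card {k : Fin n // t.1 < |a k|} : ℝ) ^ (1 / q)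

/-- Weak `ℓ^q` quasinorm of a sequence with values in `[0,∞]`, cardinalities
taken via the counting measure on `ℕ`. -/
noncomputable def weakLqSeq (q : ℝ) (a : ℕ → ℝ≥0∞) : ℝ≥0∞ :=
  ⨆ t : Set.Ioi (0 : ℝ),
    ENNReal.ofReal t.1 * Measure.count {k : ℕ | ENNReal.ofReal t.1 < a k} ^ (1 / q)

/-- Peetre `K`-functional for the couple `(L^1[0,1], L^∞[0,1])`. -/
noncomputable def Kfun (τ : ℝ) (f : ℝ → ℝ) : ℝ≥0∞ :=
  ⨅ (g : ℝ → ℝ) (h : ℝ → ℝ) (_ : f = g + h),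
    eLpNorm g 1 mu01 + ENNReal.ofReal τ * eLpNorm h ⊤ mu01

/-- The Rademacher functions `r_k(t) = sgn(sin(2^k π t))`. -/
noncomputable def rademacher (k : ℕ) (t : ℝ) : ℝ :=
  Real.sign (Real.sin (2 ^ k * Real.pi * t))

/-- Marcinkiewicz space norm `‖f‖_{M_φ} = sup_{0<t≤1} (φ(t)/t) K(t,f;L^1,L^∞)`. -/
noncomputable def MNorm (φ : ℝ → ℝ) (f : ℝ → ℝ) : ℝ≥0∞ :=
  ⨆ t : {t : ℝ // 0 < t ∧ t ≤ 1}, ENNReal.ofReal (φ t.1 / t.1) * Kfun t.1 f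

open Set

section TranspositionAux

lemma fract_window_zero (d ε : ℝ) (hε0 : 0 ≤ ε) (hε1 : ε ≤ 1) :
    volume {y : ℝ | y ∈ Set.Ico (0:ℝ) 1 ∧ Int.fract (y + d) < ε} = ENNReal.ofReal ε := by
  set d' := Int.fract d with hd'def
  have hd'0 : 0 ≤ d' := Int.fract_nonneg d
  have hd'1 : d' < 1 := Int.fract_lt_one d
  have hfr : ∀ y : ℝ, Int.fract (y + d) = Int.fract (y + d') := by
    intro y
    have : y + d = y + d' + (⌊d⌋ : ℝ) := by
      rw [hd'def, Int.fract]; ring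
    rw [this, Int.fract_add_intCast]
  have hset : {y : ℝ | y ∈ Set.Ico (0:ℝ) 1 ∧ Int.fract (y + d) < ε}
      = Ico (0:ℝ) (max 0 (ε - d')) ∪ Ico (1 - d') (min 1 (1 + ε - d')) := by
    ext y
    simp only [mem_setOf_eq, mem_Ico, mem_union]
    rw [hfr y]
    constructor
    · rintro ⟨⟨hy0, hy1⟩, hlt⟩
      by_cases h : y + d' < 1
      · rw [Int.fract_eq_self.mpr ⟨by linarith, h⟩] at hlt
        left
        exact ⟨hy0, lt_of_lt_of_le (by linarith) (le_max_right _ _)⟩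
      · push_neg at h
        have h2 : Int.fract (y + d') = y + d' - 1 := by
          have : y + d' = (y + d' - 1) + (1:ℤ) := by push_cast; ring
          rw [this, Int.fract_add_intCast, Int.fract_eq_self.mpr ⟨by linarith, by linarith⟩]
          push_cast; ring
        rw [h2] at hlt
        right
        exact ⟨by linarith, lt_min (by linarith) (by linarith)⟩
    · rintro (⟨hy0, hy1⟩ | ⟨hy0, hy1⟩)
      · have hm : y < ε - d' := by
          rcases le_or_gt (ε - d') 0 with h | h
          · rw [max_eq_left h] at hy1; linarith
          · rwa [max_eq_right h.le] at hy1
        have hfe : Int.fract (y + d') = y + d' := Int.fract_eq_self.mpr ⟨by linarith, by linarith⟩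
        exact ⟨⟨hy0, by linarith⟩, by rw [hfe]; linarith⟩
      · have hy1' : y < 1 := lt_of_lt_of_le hy1 (min_le_left _ _)
        have hy1'' : y < 1 + ε - d' := lt_of_lt_of_le hy1 (min_le_right _ _)
        have h2 : Int.fract (y + d') = y + d' - 1 := by
          have : y + d' = (y + d' - 1) + (1:ℤ) := by push_cast; ring
          rw [this, Int.fract_add_intCast, Int.fract_eq_self.mpr ⟨by linarith, by linarith⟩]
          push_cast; ring
        exact ⟨⟨by linarith, hy1'⟩, by rw [h2]; linarith⟩
  rw [hset]
  have hdisj : Disjoint (Ico (0:ℝ) (max 0 (ε - d'))) (Ico (1 - d') (min 1 (1 + ε - d'))) := by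
    rw [Set.disjoint_left]
    rintro x ⟨hx0, hx1⟩ ⟨hx2, hx3⟩
    have : max 0 (ε - d') ≤ 1 - d' := max_le (by linarith) (by linarith)
    linarith
  rw [measure_union hdisj measurableSet_Ico, Real.volume_Ico, Real.volume_Ico,
    ← ENNReal.ofReal_add (by simp) (sub_nonneg.mpr (le_min (by linarith) (by linarith)))]
  congr 1
  rcases le_total d' ε with h | h
  · rw [max_eq_right (by linarith), min_eq_left (by linarith)]; ring
  · rw [max_eq_left (by linarith), min_eq_right (by linarith)]; ring

lemma fract_window_Ico (a c ε : ℝ) (hε0 : 0 ≤ ε) (hε1 : ε ≤ 1) :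
    volume {y : ℝ | y ∈ Set.Ico a (a+1) ∧ Int.fract (y + c) < ε} = ENNReal.ofReal ε := by
  have hset : {y : ℝ | y ∈ Set.Ico a (a+1) ∧ Int.fract (y + c) < ε}
      = (fun y : ℝ => y + (-a)) ⁻¹' {z : ℝ | z ∈ Set.Ico (0:ℝ) 1 ∧ Int.fract (z + (a + c)) < ε} := by
    ext y
    simp only [mem_setOf_eq, mem_Ico, mem_preimage]
    have h1 : y + -a + (a + c) = y + c := by ring
    rw [h1]
    constructor
    · rintro ⟨⟨h2, h3⟩, h4⟩; exact ⟨⟨by linarith, by linarith⟩, h4⟩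
    · rintro ⟨⟨h2, h3⟩, h4⟩; exact ⟨⟨by linarith, by linarith⟩, h4⟩
  rw [hset, measure_preimage_add_right, fract_window_zero _ _ hε0 hε1]

lemma fract_window_scaled (t ε a n : ℝ) (hε0 : 0 ≤ ε) (hε1 : ε ≤ 1) (hn : 0 < n) :
    volume {s : ℝ | s ∈ Set.Ico a (a + 1/n) ∧ Int.fract (t + n * s) < ε}
      = ENNReal.ofReal (ε / n) := by
  have hset : {s : ℝ | s ∈ Set.Ico a (a + 1/n) ∧ Int.fract (t + n * s) < ε}
      = (fun s : ℝ => n * s) ⁻¹' {y : ℝ | y ∈ Set.Ico (n*a) (n*a+1) ∧ Int.fract (y + t) < ε} := by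
    ext s
    simp only [mem_setOf_eq, mem_Ico, mem_preimage]
    have h1 : Int.fract (n * s + t) = Int.fract (t + n * s) := by rw [add_comm]
    rw [h1]
    constructor
    · rintro ⟨⟨h2, h3⟩, h4⟩
      refine ⟨⟨(mul_le_mul_iff_right₀ hn).mpr h2, ?_⟩, h4⟩
      have := (mul_lt_mul_iff_right₀ hn).mpr h3
      rwa [mul_add, mul_one_div, div_self hn.ne'] at this
    · rintro ⟨⟨h2, h3⟩, h4⟩
      constructor
      · constructor
        · exact le_of_mul_le_mul_left (by linarith) hn
        · have := (mul_lt_mul_iff_right₀ hn).mp (show n * s < n * (a + 1/n) by rw [mul_add, mul_one_div, div_self hn.ne']; linarith)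
          exact this
      · exact h4
  rw [hset, Real.volume_preimage_mul_left hn.ne', fract_window_Ico _ _ _ hε0 hε1,
    abs_of_pos (inv_pos.mpr hn), ← ENNReal.ofReal_mul (by positivity)]
  rw [inv_mul_eq_div]

lemma fract_window_Icc_le (c ε : ℝ) (hε0 : 0 ≤ ε) (hε1 : ε ≤ 1) :
    volume {s : ℝ | s ∈ Set.Icc (0:ℝ) 1 ∧ Int.fract (s + c) < ε} ≤ ENNReal.ofReal ε := by
  have hsub : {s : ℝ | s ∈ Set.Icc (0:ℝ) 1 ∧ Int.fract (s + c) < ε}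
      ⊆ {y : ℝ | y ∈ Set.Ico (0:ℝ) 1 ∧ Int.fract (y + c) < ε} ∪ {1} := by
    rintro s ⟨⟨h0, h1⟩, h2⟩
    rcases lt_or_eq_of_le h1 with h | h
    · exact Or.inl ⟨⟨h0, h⟩, h2⟩
    · exact Or.inr (by simp [h])
  calc volume _ ≤ _ := measure_mono hsub
    _ ≤ volume {y : ℝ | y ∈ Set.Ico (0:ℝ) 1 ∧ Int.fract (y + c) < ε} + volume ({1} : Set ℝ) :=
        measure_union_le _ _
    _ = ENNReal.ofReal ε := by
        rw [Real.volume_singleton, add_zero]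
        have := fract_window_Ico 0 c ε hε0 hε1
        rw [zero_add] at this
        exact this

lemma Wp_nonneg (p : ℝ) {y : ℝ} (hy : 0 ≤ y) (hy1 : y ≤ 1) : 0 ≤ Wp p y := by
  unfold Wp
  rcases eq_or_lt_of_le hy with h | h
  · simp [← h]
  · rw [if_neg h.ne']
    apply Real.rpow_nonneg
    apply Real.log_nonneg
    rw [le_div_iff₀ h, one_mul]
    exact le_trans hy1 (by linarith [Real.exp_one_gt_d9])

lemma Wp_mono (p : ℝ) (hp : 1 < p) {x y : ℝ} (hx : 0 ≤ x) (hxy : x ≤ y)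
    (hy0 : 0 < y) (hy1 : y ≤ 1) : Wp p x ≤ Wp p y := by
  have he : (0:ℝ) < Real.exp 1 := Real.exp_pos 1
  have he1 : (1:ℝ) < Real.exp 1 := by linarith [Real.exp_one_gt_d9]
  have hly : 0 < Real.log (Real.exp 1 / y) :=
    Real.log_pos ((one_lt_div hy0).mpr (lt_of_le_of_lt hy1 he1))
  rcases eq_or_lt_of_le hx with h | hx0
  · have h0 : Wp p 0 = 0 := by unfold Wp; simp
    rw [← h, h0]
    exact Wp_nonneg p hy0.le hy1
  · unfold Wp
    rw [if_neg hx0.ne', if_neg hy0.ne']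
    apply Real.rpow_le_rpow_of_nonpos hly
    · exact Real.log_le_log (by positivity) (div_le_div_of_nonneg_left he.le hx0 hxy)
    · linarith

lemma Wp_ge (p : ℝ) (hp : 1 < p) {x B : ℝ} (hx : 0 < x) (hx1 : x ≤ 1)
    (hB : Real.log (Real.exp 1 / x) ≤ B) : B ^ (1 - p) ≤ Wp p x := by
  have he1 : (1:ℝ) < Real.exp 1 := by linarith [Real.exp_one_gt_d9]
  have hlx : 0 < Real.log (Real.exp 1 / x) :=
    Real.log_pos ((one_lt_div hx).mpr (lt_of_le_of_lt hx1 he1))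
  unfold Wp
  rw [if_neg hx.ne']
  exact Real.rpow_le_rpow_of_nonpos hlx hB (by linarith)

noncomputable def tpK (s : ℝ) : ℕ := Nat.log 2 ⌊(1 - s)⁻¹⌋₊
noncomputable def tpEps (k : ℕ) : ℝ := Real.exp (1 - 2^k)
noncomputable def tpM (p : ℝ) (k : ℕ) : ℝ := ((2:ℝ)^k) ^ ((p-1)/p)
noncomputable def tpF (p s t : ℝ) : ℝ :=
  if 0 ≤ t ∧ t < 1 then
    tpM p (tpK t) * (if Int.fract (s + 2^(tpK t + 1) * t) < tpEps (tpK t) then 1 else 0)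
  else 0

lemma tpK_eq (k : ℕ) {s : ℝ} (h1 : 1 - ((2:ℝ)^k)⁻¹ ≤ s) (h2 : s < 1 - ((2:ℝ)^(k+1))⁻¹) :
    tpK s = k := by
  have hp1 : (0:ℝ) < 2^k := by positivity
  have hp2 : (0:ℝ) < 2^(k+1) := by positivity
  have hs1 : (0:ℝ) < 1 - s := by
    have : ((2:ℝ)^(k+1))⁻¹ < 1 - s := by linarith
    linarith [inv_pos.mpr hp2]
  have hx1 : (2:ℝ)^k ≤ (1 - s)⁻¹ := by
    rw [le_inv_comm₀ hp1 hs1]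
    linarith
  have hx2 : (1 - s)⁻¹ < (2:ℝ)^(k+1) := by
    rw [inv_lt_comm₀ hs1 hp2]
    linarith
  have hn1 : 2^k ≤ ⌊(1 - s)⁻¹⌋₊ := by
    apply Nat.le_floor
    push_cast
    exact hx1
  have hn2 : ⌊(1 - s)⁻¹⌋₊ < 2^(k+1) := by
    rw [Nat.floor_lt (by positivity)]
    push_cast
    exact hx2
  exact Nat.log_eq_of_pow_le_of_lt_pow hn1 hn2

lemma tpEps_pos (k : ℕ) : 0 < tpEps k := Real.exp_pos _
lemma tpEps_le_one (k : ℕ) : tpEps k ≤ 1 := by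
  unfold tpEps
  have h : (1:ℝ) ≤ 2^k := one_le_pow₀ (by norm_num)
  calc Real.exp (1 - 2^k) ≤ Real.exp 0 := Real.exp_le_exp.mpr (by linarith)
    _ = 1 := Real.exp_zero

lemma tpF_measurable (p : ℝ) : Measurable (Function.uncurry (tpF p)) := by
  have hK : Measurable tpK := by
    apply (measurable_from_top (f := Nat.log 2)).comp
    exact Nat.measurable_floor.comp ((measurable_const.sub measurable_id).inv)
  have hKsnd : Measurable fun x : ℝ × ℝ => tpK x.2 := hK.comp measurable_snd
  have hcond : MeasurableSet {x : ℝ × ℝ | 0 ≤ x.2 ∧ x.2 < 1} := by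
    apply MeasurableSet.inter
    · exact measurableSet_le measurable_const measurable_snd
    · exact measurableSet_lt measurable_snd measurable_const
  have hM : Measurable fun x : ℝ × ℝ => tpM p (tpK x.2) :=
    (measurable_from_top (f := tpM p)).comp hKsnd
  have hpow : Measurable fun x : ℝ × ℝ => ((2:ℝ)^(tpK x.2 + 1)) :=
    (measurable_from_top (f := fun n : ℕ => (2:ℝ)^(n+1))).comp hKsnd
  have hfr : Measurable fun x : ℝ × ℝ => Int.fract (x.1 + 2^(tpK x.2 + 1) * x.2) :=
    measurable_fract.comp (measurable_fst.add (hpow.mul measurable_snd))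
  have heps : Measurable fun x : ℝ × ℝ => tpEps (tpK x.2) :=
    (measurable_from_top (f := tpEps)).comp hKsnd
  have hind : MeasurableSet {x : ℝ × ℝ | Int.fract (x.1 + 2^(tpK x.2 + 1) * x.2) < tpEps (tpK x.2)} :=
    measurableSet_lt hfr heps
  have : Function.uncurry (tpF p) = fun x : ℝ × ℝ =>
      if 0 ≤ x.2 ∧ x.2 < 1 then
        tpM p (tpK x.2) * (if Int.fract (x.1 + 2^(tpK x.2 + 1) * x.2) < tpEps (tpK x.2) then 1 else 0)
      else 0 := by
    ext x
    rfl
  rw [this]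
  exact Measurable.ite hcond (hM.mul (Measurable.ite hind measurable_const measurable_const))
    measurable_const

lemma col_norm_le (p : ℝ) (hp : 1 < p) (t : ℝ) : XpNorm p (fun s => tpF p s t) ≤ 1 := by
  have hp0 : 0 < p := by linarith
  have hpne : p ≠ 0 := hp0.ne'
  by_cases ht : 0 ≤ t ∧ t < 1
  · set k := tpK t with hk
    set c := (2:ℝ)^(k + 1) * t with hc
    set M := tpM p k with hM
    set ak := ((2:ℝ)^k : ℝ) ^ (p-1) with hak
    set w := ((2:ℝ)^k : ℝ) ^ (1-p) with hw
    have h2k : (0:ℝ) < 2^k := by positivity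
    have hM0 : 0 ≤ M := Real.rpow_nonneg h2k.le _
    have hMp : M ^ p = ak := by
      rw [hM, hak]
      unfold tpM
      rw [← Real.rpow_mul h2k.le, div_mul_cancel₀ _ hpne]
    have hak0 : 0 < ak := Real.rpow_pos_of_pos h2k _
    have hsection : ∀ s, tpF p s t = M * (if Int.fract (s + c) < tpEps k then 1 else 0) :=
      fun s => if_pos ht
    have hWeps : Wp p (tpEps k) = w := by
      unfold Wp
      rw [if_neg (tpEps_pos k).ne']
      have : Real.log (Real.exp 1 / tpEps k) = 2^k := by
        rw [Real.log_div (Real.exp_ne_zero 1) (tpEps_pos k).ne', Real.log_exp]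
        unfold tpEps
        rw [Real.log_exp]
        ring
      rw [this, hw]
    have hbd : ∀ lam ∈ Ioi (0:ℝ),
        ENNReal.ofReal (Wp p (volume {s : ℝ | s ∈ Set.Icc (0:ℝ) 1
            ∧ lam < |tpF p s t| ^ p}).toReal)
          ≤ (Ioo (0:ℝ) ak).indicator (fun _ => ENNReal.ofReal w) lam := by
      intro lam hlam
      rw [Set.mem_Ioi] at hlam
      by_cases hlt : lam < ak
      · rw [Set.indicator_of_mem (Set.mem_Ioo.mpr ⟨hlam, hlt⟩)]
        apply ENNReal.ofReal_le_ofReal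
        have hsub : {s : ℝ | s ∈ Set.Icc (0:ℝ) 1 ∧ lam < |tpF p s t| ^ p}
            ⊆ {s : ℝ | s ∈ Set.Icc (0:ℝ) 1 ∧ Int.fract (s + c) < tpEps k} := by
          rintro s ⟨hs, hlt2⟩
          refine ⟨hs, ?_⟩
          by_contra hcon
          rw [hsection s, if_neg hcon, mul_zero, abs_zero, Real.zero_rpow hpne] at hlt2
          linarith
        have hle := (measure_mono hsub).trans
          (fract_window_Icc_le c (tpEps k) (tpEps_pos k).le (tpEps_le_one k))
        have htr : (volume {s : ℝ | s ∈ Set.Icc (0:ℝ) 1 ∧ lam < |tpF p s t| ^ p}).toReal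
            ≤ tpEps k := ENNReal.toReal_le_of_le_ofReal (tpEps_pos k).le hle
        calc Wp p _ ≤ Wp p (tpEps k) :=
              Wp_mono p hp ENNReal.toReal_nonneg htr (tpEps_pos k) (tpEps_le_one k)
          _ = w := hWeps
      · have hempty : {s : ℝ | s ∈ Set.Icc (0:ℝ) 1 ∧ lam < |tpF p s t| ^ p} = ∅ := by
          rw [Set.eq_empty_iff_forall_notMem]
          rintro s ⟨hs, hlt2⟩
          rw [hsection s] at hlt2
          by_cases hcon : Int.fract (s + c) < tpEps k
          · rw [if_pos hcon, mul_one, abs_of_nonneg hM0, hMp] at hlt2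
            exact hlt hlt2
          · rw [if_neg hcon, mul_zero, abs_zero, Real.zero_rpow hpne] at hlt2
            linarith
        rw [hempty]
        simp [Wp]
    have hmeas : Measurable ((Ioo (0:ℝ) ak).indicator (fun _ => ENNReal.ofReal w)) :=
      measurable_const.indicator measurableSet_Ioo
    have hstep : (∫⁻ lam in Set.Ioi (0:ℝ),
        ENNReal.ofReal (Wp p (volume {s : ℝ | s ∈ Set.Icc (0:ℝ) 1
          ∧ lam < |tpF p s t| ^ p}).toReal))
        ≤ ENNReal.ofReal 1 := by
      calc _ ≤ ∫⁻ lam in Set.Ioi (0:ℝ),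
            (Ioo (0:ℝ) ak).indicator (fun _ => ENNReal.ofReal w) lam :=
            setLIntegral_mono hmeas hbd
        _ = ENNReal.ofReal w * volume (Ioo (0:ℝ) ak) := by
            rw [lintegral_indicator measurableSet_Ioo, setLIntegral_const,
              Measure.restrict_apply measurableSet_Ioo,
              Set.inter_eq_left.mpr (fun x hx => hx.1)]
        _ = ENNReal.ofReal 1 := by
            rw [Real.volume_Ioo, sub_zero, ← ENNReal.ofReal_mul (Real.rpow_nonneg h2k.le _)]
            congr 1
            rw [hak, ← Real.rpow_add h2k]
            norm_num
    unfold XpNorm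
    calc _ ≤ (ENNReal.ofReal 1) ^ (1/p) := by
          exact ENNReal.rpow_le_rpow hstep (by positivity)
      _ = 1 := by rw [ENNReal.ofReal_one, ENNReal.one_rpow]
  · have hzero : (fun s => tpF p s t) = fun _ => (0:ℝ) := funext fun s => if_neg ht
    rw [hzero]
    unfold XpNorm
    have : ∀ lam ∈ Ioi (0:ℝ),
        ENNReal.ofReal (Wp p (volume {s : ℝ | s ∈ Set.Icc (0:ℝ) 1
          ∧ lam < |(0:ℝ)| ^ p}).toReal) = 0 := by
      intro lam hlam
      rw [Set.mem_Ioi] at hlam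
      have : {s : ℝ | s ∈ Set.Icc (0:ℝ) 1 ∧ lam < |(0:ℝ)| ^ p} = ∅ := by
        rw [Set.eq_empty_iff_forall_notMem]
        rintro s ⟨_, hlt⟩
        rw [abs_zero, Real.zero_rpow hpne] at hlt
        linarith
      rw [this]
      simp [Wp]
    rw [setLIntegral_congr_fun measurableSet_Ioi (fun lam hlam => this lam hlam),
      lintegral_zero, ENNReal.zero_rpow_of_pos (by positivity)]
    exact zero_le_one

lemma row_norm_top (p : ℝ) (hp : 1 < p) (t : ℝ) :
    XpNorm p (fun s => tpF p t s) = ⊤ := by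
  have hp0 : 0 < p := by linarith
  have hpne : p ≠ 0 := hp0.ne'
  set a : ℕ → ℝ := fun k => ((2:ℝ)^k : ℝ) ^ (p-1) with ha
  have ha0 : ∀ k, 0 < a k := fun k => Real.rpow_pos_of_pos (by positivity) _
  have hmono : StrictMono a := by
    apply strictMono_nat_of_lt_succ
    intro k
    apply Real.rpow_lt_rpow (by positivity) _ (by linarith)
    rw [pow_succ]
    nlinarith [pow_pos (show (0:ℝ) < 2 by norm_num) k]
  set c0 : ℝ := ((2:ℝ)^(p-1) - 1) * ((4:ℝ)^(1-p)) with hc0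
  have hc0pos : 0 < c0 := by
    apply mul_pos
    · have : (1:ℝ) < (2:ℝ)^(p-1) := by
        rw [show (1:ℝ) = (2:ℝ)^(0:ℝ) by simp]
        exact Real.rpow_lt_rpow_of_exponent_lt (by norm_num) (by linarith)
      linarith
    · exact Real.rpow_pos_of_pos (by norm_num) _
  -- the superlevel-measure integrand
  set G : ℝ → ℝ≥0∞ := fun lam =>
    ENNReal.ofReal (Wp p (volume {s : ℝ | s ∈ Set.Icc (0:ℝ) 1
      ∧ lam < |tpF p t s| ^ p}).toReal) with hG
  -- per-block lower bound
  have hblock : ∀ k : ℕ, ∀ lam ∈ Ioo (a k) (a (k+1)), ENNReal.ofReal (((2:ℝ)^(k+2) : ℝ)^(1-p)) ≤ G lam := by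
    intro k lam hlam
    obtain ⟨hl1, hl2⟩ := hlam
    have h2k1 : (0:ℝ) < 2^(k+1) := by positivity
    have h2k2 : (0:ℝ) < 2^(k+2) := by positivity
    set A : ℝ := 1 - ((2:ℝ)^(k+1))⁻¹ with hA
    set n : ℝ := (2:ℝ)^(k+2) with hn
    have hA1n : A + 1/n = 1 - ((2:ℝ)^(k+2))⁻¹ := by
      rw [hA, hn, one_div]
      have : ((2:ℝ)^(k+1))⁻¹ = 2 * ((2:ℝ)^(k+2))⁻¹ := by
        rw [pow_succ]
        field_simp
        rw [pow_succ, pow_succ]; ring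
      rw [this]; ring
    -- the witness set
    set F : Set ℝ := {s : ℝ | s ∈ Set.Ico A (A + 1/n) ∧ Int.fract (t + n * s) < tpEps (k+1)}
      with hF
    have hFsub : F ⊆ {s : ℝ | s ∈ Set.Icc (0:ℝ) 1 ∧ lam < |tpF p t s| ^ p} := by
      rintro s ⟨⟨hs1, hs2⟩, hs3⟩
      have hA0 : (0:ℝ) ≤ A := by
        rw [hA]
        have : ((2:ℝ)^(k+1))⁻¹ ≤ 1 := by
          rw [inv_le_one_iff₀]
          right
          exact one_le_pow₀ (by norm_num)
        linarith
      have hs2' : s < 1 - ((2:ℝ)^(k+2))⁻¹ := by rwa [hA1n] at hs2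
      have hs1' : 0 ≤ s := le_trans hA0 hs1
      have hslt1 : s < 1 := by
        have : (0:ℝ) < ((2:ℝ)^(k+2))⁻¹ := by positivity
        linarith
      have hK : tpK s = k + 1 := tpK_eq (k+1) hs1 hs2'
      have hval : tpF p t s = tpM p (k+1) := by
        unfold tpF
        rw [if_pos ⟨hs1', hslt1⟩, hK, if_pos (by rwa [hn] at hs3), mul_one]
      refine ⟨⟨hs1', hslt1.le⟩, ?_⟩
      rw [hval]
      have hM0 : (0:ℝ) ≤ tpM p (k+1) := Real.rpow_nonneg (by positivity) _
      have hMp : tpM p (k+1) ^ p = a (k+1) := by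
        unfold tpM
        rw [← Real.rpow_mul (by positivity : (0:ℝ) ≤ (2:ℝ)^(k+1)), div_mul_cancel₀ _ hpne]
      rw [abs_of_nonneg hM0, hMp]
      exact hl2
    set δ : ℝ := tpEps (k+1) / 2^(k+2) with hδ
    have hδpos : 0 < δ := div_pos (tpEps_pos _) h2k2
    have hvolF : volume F = ENNReal.ofReal δ := by
      rw [hF, hδ, hn]
      exact fract_window_scaled t (tpEps (k+1)) A ((2:ℝ)^(k+2))
        (tpEps_pos _).le (tpEps_le_one _) h2k2
    set V := volume {s : ℝ | s ∈ Set.Icc (0:ℝ) 1 ∧ lam < |tpF p t s| ^ p} with hV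
    have hVge : ENNReal.ofReal δ ≤ V := hvolF ▸ measure_mono hFsub
    have hVle : V ≤ 1 := by
      have : {s : ℝ | s ∈ Set.Icc (0:ℝ) 1 ∧ lam < |tpF p t s| ^ p} ⊆ Set.Icc (0:ℝ) 1 :=
        fun s hs => hs.1
      calc V ≤ volume (Set.Icc (0:ℝ) 1) := measure_mono this
        _ = 1 := by rw [Real.volume_Icc]; norm_num
    have hVne : V ≠ ⊤ := (lt_of_le_of_lt hVle (by norm_num)).ne
    set x := V.toReal with hx
    have hxδ : δ ≤ x := (ENNReal.ofReal_le_iff_le_toReal hVne).mp hVge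
    have hx1 : x ≤ 1 := by
      rw [hx]
      exact ENNReal.toReal_le_of_le_ofReal zero_le_one (by rwa [ENNReal.ofReal_one])
    have hx0 : 0 < x := lt_of_lt_of_le hδpos hxδ
    have hlog : Real.log (Real.exp 1 / x) ≤ (2:ℝ)^(k+2) := by
      rw [Real.log_div (Real.exp_ne_zero 1) hx0.ne', Real.log_exp]
      have h1 : Real.log δ ≤ Real.log x := Real.log_le_log hδpos hxδ
      have h2 : Real.log δ = (1 - 2^(k+1)) - (k+2) * Real.log 2 := by
        rw [hδ, Real.log_div (tpEps_pos _).ne' (by positivity), Real.log_pow]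
        unfold tpEps
        rw [Real.log_exp]
        push_cast
        ring
      have hlog2 : Real.log 2 ≤ 1 := by
        have := Real.log_le_sub_one_of_pos (show (0:ℝ) < 2 by norm_num)
        linarith
      have hk2 : ((k:ℝ) + 2) ≤ 2^(k+1) := by
        have : k + 2 ≤ 2^(k+1) := Nat.succ_le_of_lt (Nat.lt_pow_self (by norm_num : 1 < 2))
        calc ((k:ℝ) + 2) = ((k + 2 : ℕ) : ℝ) := by push_cast; ring
          _ ≤ ((2^(k+1) : ℕ) : ℝ) := Nat.cast_le.mpr this
          _ = (2:ℝ)^(k+1) := by push_cast; ring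
      have hlogpos : 0 ≤ Real.log 2 := Real.log_nonneg (by norm_num)
      have : 1 - Real.log x ≤ 1 - Real.log δ := by linarith
      have h3 : 1 - Real.log δ = 2^(k+1) + (k+2) * Real.log 2 := by rw [h2]; push_cast; ring
      have h4 : ((k:ℝ)+2) * Real.log 2 ≤ 2^(k+1) := by
        calc ((k:ℝ)+2) * Real.log 2 ≤ ((k:ℝ)+2) * 1 := by
              apply mul_le_mul_of_nonneg_left hlog2 (by positivity)
          _ = (k:ℝ)+2 := mul_one _
          _ ≤ 2^(k+1) := hk2
      have h5 : ((2:ℝ))^(k+2) = 2^(k+1) + 2^(k+1) := by rw [pow_succ]; ring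
      calc 1 - Real.log x ≤ 1 - Real.log δ := this
        _ = 2^(k+1) + ((k:ℝ)+2) * Real.log 2 := by rw [h3]
        _ ≤ 2^(k+1) + 2^(k+1) := by linarith
        _ = (2:ℝ)^(k+2) := h5.symm
    have := Wp_ge p hp hx0 hx1 hlog
    rw [hG]
    exact ENNReal.ofReal_le_ofReal this
  -- sum over blocks
  have hkey : (∫⁻ lam in Set.Ioi (0:ℝ), G lam) = ⊤ := by
    have hsub : (⋃ k : ℕ, Ioo (a k) (a (k+1))) ⊆ Set.Ioi (0:ℝ) := by
      rintro x hx
      obtain ⟨k, hk⟩ := Set.mem_iUnion.mp hx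
      exact lt_trans (ha0 k) hk.1
    have hdisj : Pairwise (Function.onFun Disjoint (fun k => Ioo (a k) (a (k+1)))) := by
      have key : ∀ i j : ℕ, i < j → Disjoint (Ioo (a i) (a (i+1))) (Ioo (a j) (a (j+1))) := by
        intro i j hij
        apply Set.disjoint_left.mpr
        rintro x ⟨_, hx2⟩ ⟨hx3, _⟩
        have : a (i+1) ≤ a j := hmono.monotone (by omega)
        linarith
      intro i j hij
      rcases hij.lt_or_gt with h | h
      · exact key i j h
      · exact (key j i h).symm
    have h1 : (∫⁻ lam in ⋃ k : ℕ, Ioo (a k) (a (k+1)), G lam)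
        ≤ ∫⁻ lam in Set.Ioi (0:ℝ), G lam := lintegral_mono_set hsub
    have h2 : (∫⁻ lam in ⋃ k : ℕ, Ioo (a k) (a (k+1)), G lam)
        = ∑' k : ℕ, ∫⁻ lam in Ioo (a k) (a (k+1)), G lam :=
      lintegral_iUnion (fun k => measurableSet_Ioo) hdisj G
    have h3 : ∀ k : ℕ, ENNReal.ofReal c0 ≤ ∫⁻ lam in Ioo (a k) (a (k+1)), G lam := by
      intro k
      have hptw : ∀ lam, (Ioo (a k) (a (k+1))).indicator
          (fun _ => ENNReal.ofReal (((2:ℝ)^(k+2) : ℝ)^(1-p))) lam ≤ G lam := by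
        intro lam
        by_cases h : lam ∈ Ioo (a k) (a (k+1))
        · rw [Set.indicator_of_mem h]
          exact hblock k lam h
        · rw [Set.indicator_of_notMem h]
          exact zero_le
      have step1 : (∫⁻ lam in Ioo (a k) (a (k+1)), (Ioo (a k) (a (k+1))).indicator
            (fun _ => ENNReal.ofReal (((2:ℝ)^(k+2) : ℝ)^(1-p))) lam)
          ≤ ∫⁻ lam in Ioo (a k) (a (k+1)), G lam := lintegral_mono hptw
      have step2 : (∫⁻ lam in Ioo (a k) (a (k+1)), (Ioo (a k) (a (k+1))).indicator
            (fun _ => ENNReal.ofReal (((2:ℝ)^(k+2) : ℝ)^(1-p))) lam)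
          = ENNReal.ofReal c0 := by
        rw [lintegral_indicator measurableSet_Ioo, setLIntegral_const,
          Measure.restrict_apply measurableSet_Ioo, Set.inter_self, Real.volume_Ioo,
          ← ENNReal.ofReal_mul (Real.rpow_nonneg (by positivity) _)]
        congr 1
        have e1 : ((2:ℝ)^k : ℝ)^(1-p) * ((2:ℝ)^k : ℝ)^(p-1) = 1 := by
          rw [← Real.rpow_add (by positivity)]
          norm_num
        have e2 : ((2:ℝ)^(k+2) : ℝ) = 4 * (2:ℝ)^k := by rw [pow_succ, pow_succ]; ring
        have e3 : ((2:ℝ)^(k+1) : ℝ) = 2 * (2:ℝ)^k := by rw [pow_succ]; ring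
        have e4 : ((2:ℝ)^(k+2) : ℝ)^(1-p) = (4:ℝ)^(1-p) * ((2:ℝ)^k : ℝ)^(1-p) := by
          rw [e2, Real.mul_rpow (by norm_num) (by positivity)]
        have e5 : a (k+1) = (2:ℝ)^(p-1) * ((2:ℝ)^k : ℝ)^(p-1) := by
          rw [ha]
          simp only
          rw [e3, Real.mul_rpow (by norm_num) (by positivity)]
        rw [e4, e5, hc0, ha]
        simp only
        calc (4:ℝ)^(1-p) * ((2:ℝ)^k : ℝ)^(1-p)
              * ((2:ℝ)^(p-1) * ((2:ℝ)^k : ℝ)^(p-1) - ((2:ℝ)^k : ℝ)^(p-1))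
            = ((2:ℝ)^(p-1) - 1) * ((4:ℝ)^(1-p))
              * (((2:ℝ)^k : ℝ)^(1-p) * ((2:ℝ)^k : ℝ)^(p-1)) := by ring
          _ = ((2:ℝ)^(p-1) - 1) * ((4:ℝ)^(1-p)) := by rw [e1, mul_one]
      rw [← step2]
      exact step1
    have h4 : (∑' _ : ℕ, ENNReal.ofReal c0) = ⊤ :=
      ENNReal.tsum_const_eq_top_of_ne_zero (by
        simp only [ne_eq, ENNReal.ofReal_eq_zero, not_le]
        exact hc0pos)
    have h5 : (⊤:ℝ≥0∞) ≤ ∫⁻ lam in Set.Ioi (0:ℝ), G lam := by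
      calc (⊤:ℝ≥0∞) = ∑' _ : ℕ, ENNReal.ofReal c0 := h4.symm
        _ ≤ ∑' k : ℕ, ∫⁻ lam in Ioo (a k) (a (k+1)), G lam := ENNReal.tsum_le_tsum h3
        _ = ∫⁻ lam in ⋃ k : ℕ, Ioo (a k) (a (k+1)), G lam := h2.symm
        _ ≤ _ := h1
    exact top_le_iff.mp h5
  unfold XpNorm
  rw [hG] at hkey
  rw [hkey]
  exact ENNReal.top_rpow_of_pos (by positivity)

end TranspositionAux

/-- Example: for `1 < p < 2`, the transposition operator is NOT bounded from
`L^∞(X_p)` to `L^1(X_p)` on `[0,1]²`. -/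
theorem transposition_not_bounded_Linfty_to_L1 (p : ℝ) (hp : 1 < p) (hp2 : p < 2)
    (C : ℝ) (hC : 0 < C) :
    ∃ f : ℝ → ℝ → ℝ, Measurable (Function.uncurry f) ∧
      (∀ᵐ t ∂mu01, XpNorm p (fun s => f s t) ≤ 1) ∧
      ENNReal.ofReal C < ∫⁻ t, XpNorm p (fun s => f t s) ∂mu01 := by
  refine ⟨tpF p, tpF_measurable p, Filter.Eventually.of_forall (fun t => col_norm_le p hp t), ?_⟩
  have hint : (∫⁻ t, XpNorm p (fun s => tpF p t s) ∂mu01) = ⊤ := by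
    have h1 : (∫⁻ t, XpNorm p (fun s => tpF p t s) ∂mu01) = ∫⁻ _, (⊤:ℝ≥0∞) ∂mu01 :=
      lintegral_congr (fun t => row_norm_top p hp t)
    rw [h1, lintegral_const]
    have h2 : mu01 Set.univ = 1 := by
      unfold mu01
      rw [Measure.restrict_apply_univ, Real.volume_Icc]
      norm_num
    rw [h2, mul_one]
  rw [hint]
  exact ENNReal.ofReal_lt_top
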